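/- Let Q be an r×r real matrix, U a v×r real matrix and V an r×v real matrix such that U·V = I_v (the v×v identity) and V·U·Q·V = Q·V. Then for every real t, V·U·exp(tQ)·V = exp(tQ)·V, where exp denotes the matrix exponential. -/

import Mathlib

open NormedSpace in
/-- If `A * V = V * B` then `exp A * V = V * exp B`. -/
theorem exp_semiconj_aux (r v : ℕ) (A : Matrix (Fin r) (Fin r) ℝ)
    (B : Matrix (Fin v) (Fin v) ℝ) (V : Matrix (Fin r) (Fin v) ℝ)
    (h : A * V = V * B) : exp A * V = V * exp B := by
  letI : NormedRing (Matrix (Fin r) (Fin r) ℝ) := Matrix.linftyOpNormedRing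
  letI : NormedAlgebra ℝ (Matrix (Fin r) (Fin r) ℝ) := Matrix.linftyOpNormedAlgebra
  letI : NormedRing (Matrix (Fin v) (Fin v) ℝ) := Matrix.linftyOpNormedRing
  letI : NormedAlgebra ℝ (Matrix (Fin v) (Fin v) ℝ) := Matrix.linftyOpNormedAlgebra
  have hpow : ∀ n : ℕ, A ^ n * V = V * B ^ n := by
    intro n
    induction n with
    | zero => simp
    | succ n ih =>
      rw [pow_succ', pow_succ', Matrix.mul_assoc, ih, ← Matrix.mul_assoc, h,
        Matrix.mul_assoc]
  -- right multiplication by V as a continuous linear map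
  let L : Matrix (Fin r) (Fin r) ℝ →ₗ[ℝ] Matrix (Fin r) (Fin v) ℝ :=
    { toFun := fun M => M * V
      map_add' := fun M N => Matrix.add_mul M N V
      map_smul' := fun c M => Matrix.smul_mul c M V }
  let R : Matrix (Fin v) (Fin v) ℝ →ₗ[ℝ] Matrix (Fin r) (Fin v) ℝ :=
    { toFun := fun M => V * M
      map_add' := fun M N => Matrix.mul_add V M N
      map_smul' := fun c M => (Matrix.mul_smul V c M) }
  have hL : Continuous L := L.continuous_of_finiteDimensional
  have hR : Continuous R := R.continuous_of_finiteDimensional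
  have hA : Summable fun n : ℕ => ((n.factorial : ℝ))⁻¹ • A ^ n := expSeries_summable' A
  have hB : Summable fun n : ℕ => ((n.factorial : ℝ))⁻¹ • B ^ n := expSeries_summable' B
  have h1 : exp A * V = ∑' n : ℕ, ((n.factorial : ℝ))⁻¹ • (A ^ n * V) := by
    rw [exp_eq_tsum ℝ]
    refine ((hA.hasSum.map L hL).tsum_eq).symm.trans (tsum_congr fun n => ?_)
    simp [L, Function.comp, smul_mul_assoc]
  have h2 : V * exp B = ∑' n : ℕ, ((n.factorial : ℝ))⁻¹ • (V * B ^ n) := by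
    rw [exp_eq_tsum ℝ]
    refine ((hB.hasSum.map R hR).tsum_eq).symm.trans (tsum_congr fun n => ?_)
    simp [R, Function.comp, mul_smul_comm]
  rw [h1, h2]
  exact tsum_congr fun n => by rw [hpow n]

open NormedSpace in
theorem lumpable_generator_implies_lumpable_semigroup (r v : ℕ)
    (Q : Matrix (Fin r) (Fin r) ℝ) (U : Matrix (Fin v) (Fin r) ℝ)
    (V : Matrix (Fin r) (Fin v) ℝ)
    (hUV : U * V = 1) (hQ : V * U * Q * V = Q * V) (t : ℝ) :
    V * U * exp (t • Q) * V = exp (t • Q) * V := by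
  have key : (t • Q) * V = V * (t • (U * Q * V)) := by
    rw [Matrix.smul_mul, Matrix.mul_smul, ← hQ]
    simp [Matrix.mul_assoc]
  have h := exp_semiconj_aux r v (t • Q) (t • (U * Q * V)) V key
  calc V * U * exp (t • Q) * V = V * U * (exp (t • Q) * V) := by
        rw [Matrix.mul_assoc]
    _ = V * U * (V * exp (t • (U * Q * V))) := by rw [h]
    _ = V * (U * V) * exp (t • (U * Q * V)) := by
        simp only [Matrix.mul_assoc]
    _ = V * exp (t • (U * Q * V)) := by rw [hUV, Matrix.mul_one]
    _ = exp (t • Q) * V := h.symm
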